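/- Let p be a monic integer polynomial of degree d ≥ 2 and P(D) the Fourier multiplier with symbol p(k) on L²(𝕋). There exists a constant C > 0 such that for all z ∈ ℂ with |Im z| ≥ 1 and all f ∈ L¹(𝕋), ‖(P(D) − z)^{−1} f‖_{L^∞(𝕋)} ≤ C ‖f‖_{L¹(𝕋)}. -/

import Mathlib

open MeasureTheory Real

section Aux
open Polynomial Filter


lemma natDegree_X_add_one' {R : Type*} [Semiring R] [Nontrivial R] :
    (X + 1 : R[X]).natDegree = 1 := by
  simpa using natDegree_X_add_C (1 : R)

lemma coeff_comp_X_add_one' (Q : ℤ[X]) (m : ℕ) (hm : Q.natDegree ≤ m) :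
    (Q.comp (X + 1)).coeff m = Q.coeff m := by
  rcases eq_or_ne Q 0 with rfl | hQ
  · simp
  have hdeg : (Q.comp (X + 1)).natDegree = Q.natDegree := by
    rw [natDegree_comp, natDegree_X_add_one', mul_one]
  rcases lt_or_eq_of_le hm with h | h
  · rw [coeff_eq_zero_of_natDegree_lt (lt_of_le_of_lt hdeg.le h),
      coeff_eq_zero_of_natDegree_lt h]
  · have h1 : (Q.comp (X + 1)).coeff m = (Q.comp (X+1)).leadingCoeff := by
      rw [leadingCoeff, hdeg, ← h]
    rw [h1, leadingCoeff_comp (by rw [natDegree_X_add_one']; omega)]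
    have h2 : (X + 1 : ℤ[X]).leadingCoeff = 1 := by simpa using (monic_X_add_C (1:ℤ)).leadingCoeff
    rw [h2, one_pow, mul_one, leadingCoeff, ← h]

lemma gap_lemma (P : Polynomial ℤ) (hP : P.Monic) (hd : 2 ≤ P.natDegree) :
    ∃ K : ℕ, 1 ≤ K ∧ ∀ k : ℕ, K ≤ k → (k : ℤ) ≤ P.eval ((k : ℤ) + 1) - P.eval (k : ℤ) := by
  set d := P.natDegree with hdd
  have hP0 : P ≠ 0 := hP.ne_zero
  set D : Polynomial ℤ := P.comp (X + 1) - P with hD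
  have hXone : (X + 1 : ℤ[X]).natDegree = 1 := natDegree_X_add_one'
  have hcompdeg : (P.comp (X + 1)).natDegree = d := by
    rw [natDegree_comp, hXone, mul_one]
  have hcomp0 : P.comp (X + 1) ≠ 0 := fun h => by
    rw [h, natDegree_zero] at hcompdeg; omega
  have hcomplc : (P.comp (X + 1)).leadingCoeff = 1 := by
    rw [leadingCoeff_comp (by rw [hXone]; omega)]
    have h2 : (X + 1 : ℤ[X]).leadingCoeff = 1 := by simpa using (monic_X_add_C (1:ℤ)).leadingCoeff
    simp [hP.leadingCoeff, h2]
  have hdegD : D.degree < (d : ℕ) := by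
    have h1 : (P.comp (X+1)).degree = P.degree := by
      rw [degree_eq_natDegree hP0, degree_eq_natDegree hcomp0, hcompdeg]
    have h2 := degree_sub_lt h1 hcomp0 (by rw [hcomplc, hP.leadingCoeff])
    rw [← hD, h1] at h2
    calc D.degree < P.degree := h2
      _ ≤ (d:ℕ) := degree_le_natDegree
  -- coefficient computation
  have hcoeff : D.coeff (d - 1) = d := by
    set R : ℤ[X] := P - X ^ d with hR
    have hRdeg : R.natDegree ≤ d - 1 := by
      rcases eq_or_ne R 0 with h | h
      · simp [h]
      have hlt : R.degree < (d : ℕ) := by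
        have h2 := degree_sub_lt (by rw [degree_X_pow, degree_eq_natDegree hP.ne_zero]) hP.ne_zero
          (by rw [hP.leadingCoeff, monic_X_pow d |>.leadingCoeff])
        rw [← hR] at h2
        calc R.degree < P.degree := h2
          _ ≤ (d : ℕ) := degree_le_natDegree
      have := (natDegree_lt_iff_degree_lt h).mpr hlt
      omega
    have hPsplit : P = X ^ d + R := by rw [hR]; ring
    have hsplit : P.comp (X + 1) - P = ((X+1)^d - X^d) + (R.comp (X+1) - R) := by
      nth_rewrite 1 [hPsplit]
      nth_rewrite 1 [hPsplit]
      rw [add_comp, pow_comp, X_comp]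
      ring
    rw [hD, hsplit, coeff_add, coeff_sub, coeff_sub, coeff_X_add_one_pow,
      coeff_comp_X_add_one' R _ hRdeg, coeff_X_pow]
    have h1 : d.choose (d-1) = d := by
      have := Nat.choose_symm (show 1 ≤ d by omega)
      rw [Nat.choose_one_right] at this
      omega
    have h2 : ¬ (d - 1 = d) := by omega
    simp [h1, h2]
  have hD0 : D ≠ 0 := fun h => by rw [h, coeff_zero] at hcoeff; exact_mod_cast absurd hcoeff.symm (by positivity)
  have hDdeg : D.natDegree = d - 1 := by
    have h1 : D.natDegree < d := (natDegree_lt_iff_degree_lt hD0).mpr hdegD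
    have h2 : d - 1 ≤ D.natDegree := le_natDegree_of_ne_zero (by rw [hcoeff]; positivity)
    omega
  -- real side
  set Dr : Polynomial ℝ := D.map (Int.castRingHom ℝ) with hDr
  have hinj : Function.Injective (Int.castRingHom ℝ) := Int.cast_injective
  have hDrdeg : Dr.natDegree = d - 1 := by rw [hDr, natDegree_map_eq_of_injective hinj, hDdeg]
  have hDrlc : Dr.leadingCoeff = (d : ℝ) := by
    rw [leadingCoeff, hDrdeg, hDr, coeff_map, ← hDdeg, ← leadingCoeff, leadingCoeff, hDdeg, hcoeff]
    simp
  have hlo := (Polynomial.isEquivalent_atTop_lead Dr).def (show (0:ℝ) < 1/2 by norm_num)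
  have hev : ∀ᶠ x : ℝ in atTop, x ≤ eval x Dr := by
    filter_upwards [hlo, eventually_ge_atTop (1:ℝ)] with x hx hx1
    rw [hDrlc, hDrdeg] at hx
    set m := d - 1 with hm
    have hxm : x ≤ x ^ m := le_self_pow₀ (by linarith) (by omega)
    have hx0 : (0:ℝ) < x := by linarith
    have hxmpos : (0:ℝ) < x ^ m := by positivity
    have hc2 : (2:ℝ) ≤ (d:ℝ) := by exact_mod_cast hd
    simp only [Pi.sub_apply, Real.norm_eq_abs] at hx
    have habs : |(d:ℝ) * x ^ m| = (d:ℝ) * x ^ m := abs_of_nonneg (by positivity)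
    rw [habs] at hx
    have := abs_le.mp hx
    nlinarith
  obtain ⟨x₀, hx₀⟩ := eventually_atTop.mp hev
  refine ⟨max 1 ⌈x₀⌉₊, le_max_left _ _, fun k hk => ?_⟩
  have hkx : x₀ ≤ (k : ℝ) := by
    have h1 : (⌈x₀⌉₊ : ℝ) ≤ (k:ℝ) := by exact_mod_cast le_trans (le_max_right _ _) hk
    exact le_trans (Nat.le_ceil x₀) h1
  have h2 := hx₀ (k : ℝ) hkx
  have h3 : eval ((k:ℝ)) Dr = ((D.eval (k:ℤ) : ℤ) : ℝ) := by
    rw [hDr]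
    have := eval_intCast_map (Int.castRingHom ℝ) D (k : ℤ)
    simpa using this
  rw [h3] at h2
  have h4 : ((k:ℕ):ℤ) ≤ D.eval (k:ℤ) := by exact_mod_cast h2
  have h5 : D.eval (k:ℤ) = P.eval ((k:ℤ)+1) - P.eval (k:ℤ) := by
    rw [hD]; simp [eval_comp]
  rw [h5] at h4
  exact h4


noncomputable def G : ℤ → ℝ := fun n => (if n.natAbs ≤ 1 then (1:ℝ) else 0) + 8 * ((n:ℝ)^2)⁻¹

lemma Gmaj_nonneg : ∀ n : ℤ, 0 ≤ G n := by
  intro n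
  unfold G
  apply add_nonneg
  · split <;> norm_num
  · positivity

lemma Gmaj_summable : Summable G := by
  unfold G
  apply Summable.add
  · apply summable_of_ne_finset_zero (s := ({-1,0,1} : Finset ℤ))
    intro n hn
    simp only [Finset.mem_insert, Finset.mem_singleton] at hn
    push_neg at hn
    rw [if_neg (by omega)]
  · have h2 : Summable (fun n : ℤ => 1 / (n:ℝ)^2) := Real.summable_one_div_int_pow.mpr one_lt_two
    simpa [one_div] using h2.mul_left (8:ℝ)

lemma sum_lemma (v : ℕ → ℤ) (K : ℕ) (hK : 1 ≤ K)
    (hgap : ∀ k : ℕ, K ≤ k → (k : ℤ) ≤ v (k+1) - v k) :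
    ∃ Cu : ℝ, 0 < Cu ∧ ∀ a : ℝ,
      Summable (fun k : ℕ => (max 1 |((v k : ℝ)) - a|)⁻¹) ∧
      ∑' k : ℕ, (max 1 |((v k : ℝ)) - a|)⁻¹ ≤ Cu := by
  have chain : ∀ j : ℕ, K ≤ j → ∀ m : ℕ, (m:ℤ) * ((m:ℤ)+1) ≤ 2 * (v (j+m) - v j) := by
    intro j hj m
    induction m with
    | zero => simp
    | succ m ih =>
      have hg := hgap (j+m) (by omega)
      have hj1 : (1:ℤ) ≤ (j:ℤ) := by exact_mod_cast le_trans hK hj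
      have he : j + (m+1) = (j+m) + 1 := by omega
      rw [he]
      push_cast at hg ⊢
      nlinarith
  have hG0 : ∀ n, 0 ≤ G n := Gmaj_nonneg
  have hGsum : Summable G := Gmaj_summable
  refine ⟨K + (∑' n : ℤ, G n) + 1, by
    have h1 : (1:ℝ) ≤ (K:ℝ) := by exact_mod_cast hK
    linarith [(tsum_nonneg hG0 : (0:ℝ) ≤ ∑' n : ℤ, G n)], fun a => ?_⟩
  have hu0 : ∀ k : ℕ, (0:ℝ) ≤ (max 1 |((v k : ℝ)) - a|)⁻¹ := fun k => by positivity
  have hu1 : ∀ k : ℕ, (max 1 |((v k : ℝ)) - a|)⁻¹ ≤ 1 := by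
    intro k
    have h1 : (1:ℝ) ≤ max 1 |((v k : ℝ)) - a| := le_max_left _ _
    have h0 : (0:ℝ) < max 1 |((v k : ℝ)) - a| := by linarith
    rw [inv_le_one_iff₀]
    right; exact h1
  have hex : ∃ m : ℕ, a ≤ ((v (K+m) : ℤ) : ℝ) := by
    refine ⟨(⌈a⌉ - v K).toNat, ?_⟩
    have h1 := chain K le_rfl (⌈a⌉ - v K).toNat
    set m : ℕ := (⌈a⌉ - v K).toNat
    have h2 : (⌈a⌉ - v K : ℤ) ≤ (m:ℤ) := Int.self_le_toNat _
    have hmsq : (m:ℤ) ≤ (m:ℤ) * (m:ℤ) := by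
      rcases Nat.eq_zero_or_pos m with h | h
      · simp [h]
      · have : (1:ℤ) ≤ (m:ℤ) := by exact_mod_cast h
        nlinarith
    have h3 : (⌈a⌉ : ℤ) ≤ v (K + m) := by nlinarith [h1, h2, hmsq]
    have h4 : a ≤ (⌈a⌉ : ℝ) := Int.le_ceil a
    have h5 : ((⌈a⌉ : ℤ) : ℝ) ≤ ((v (K+m) : ℤ) : ℝ) := by exact_mod_cast h3
    linarith
  set k₀ : ℕ := K + Nat.find hex with hk₀
  have hk₀a : a ≤ ((v k₀ : ℤ) : ℝ) := Nat.find_spec hex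
  have hk₀K : K ≤ k₀ := Nat.le_add_right _ _
  have hmin : ∀ j : ℕ, K ≤ j → j < k₀ → ((v j : ℤ) : ℝ) < a := by
    intro j hj hlt
    have h1 := Nat.find_min hex (m := j - K) (by omega)
    rw [show K + (j - K) = j by omega] at h1
    linarith [not_le.mp h1]
  have hbound : ∀ k : ℕ, (max 1 |((v k : ℝ)) - a|)⁻¹ ≤
      (if k < K then (1:ℝ) else 0) + G ((k:ℤ) - (k₀:ℤ)) := by
    intro k
    by_cases hkK : k < K
    · rw [if_pos hkK]
      linarith [hu1 k, hG0 ((k:ℤ) - (k₀:ℤ))]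
    rw [if_neg hkK, zero_add]
    push_neg at hkK
    set n : ℤ := (k:ℤ) - (k₀:ℤ) with hn
    by_cases hn1 : n.natAbs ≤ 1
    · rw [show G n = 1 + 8 * ((n:ℝ)^2)⁻¹ by unfold G; rw [if_pos hn1]]
      have h8 : (0:ℝ) ≤ 8 * ((n:ℝ)^2)⁻¹ := by positivity
      linarith [hu1 k]
    rw [show G n = 8 * ((n:ℝ)^2)⁻¹ by unfold G; rw [if_neg hn1, zero_add]]
    rcases lt_or_ge k k₀ with hlt | hge
    · -- k ≤ k₀ - 2
      have hm2 : k + 2 ≤ k₀ := by omega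
      set m : ℕ := k₀ - k with hm
      have hmm : 2 ≤ m := by omega
      have hmr : (2:ℝ) ≤ (m:ℝ) := by exact_mod_cast hmm
      have hc := chain k hkK (m - 1)
      rw [show k + (m-1) = k₀ - 1 by omega] at hc
      have hva : ((v (k₀-1) : ℤ) : ℝ) < a := hmin (k₀-1) (by omega) (by omega)
      have hm1 : ((m-1:ℕ):ℝ) = (m:ℝ) - 1 := by
        push_cast [Nat.cast_sub (show 1 ≤ m by omega)]; ring
      have hcr : ((m:ℝ) - 1) * (m:ℝ) ≤ 2 * (((v (k₀-1) : ℤ):ℝ) - ((v k : ℤ):ℝ)) := by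
        have h2 : (((m-1:ℕ)):ℝ) * ((((m-1:ℕ)):ℝ)+1) ≤ 2 * (((v (k₀-1) : ℤ):ℝ) - ((v k : ℤ):ℝ)) := by
          exact_mod_cast hc
        rw [hm1] at h2
        nlinarith
      have hdist : (m:ℝ)^2 / 4 ≤ a - ((v k : ℤ):ℝ) := by nlinarith
      have hmax : (m:ℝ)^2/4 ≤ max 1 |((v k : ℝ)) - a| := by
        refine le_trans ?_ (le_max_right _ _)
        rw [abs_sub_comm, abs_of_nonneg (by nlinarith)]
        exact hdist
      have hpos : (0:ℝ) < (m:ℝ)^2/4 := by nlinarith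
      have humk : (max 1 |((v k : ℝ)) - a|)⁻¹ ≤ ((m:ℝ)^2/4)⁻¹ := by
        apply inv_anti₀ hpos hmax
      refine le_trans humk ?_
      have hnm : ((n:ℝ))^2 = (m:ℝ)^2 := by
        have h3 : (n:ℝ) = (k:ℝ) - (k₀:ℝ) := by rw [hn]; push_cast; ring
        have h4 : (m:ℝ) = (k₀:ℝ) - (k:ℝ) := by
          rw [hm]; push_cast [Nat.cast_sub (show k ≤ k₀ by omega)]; ring
        rw [h3, h4]; ring
      rw [hnm, inv_div]
      rw [div_eq_mul_inv]
      have : (0:ℝ) ≤ ((m:ℝ)^2)⁻¹ := by positivity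
      nlinarith
    · -- k ≥ k₀ + 2
      have hm2 : k₀ + 2 ≤ k := by
        rcases Nat.lt_or_ge k (k₀ + 2) with h | h
        · exfalso; apply hn1; omega
        · exact h
      set m : ℕ := k - k₀ with hm
      have hmm : 2 ≤ m := by omega
      have hmr : (2:ℝ) ≤ (m:ℝ) := by exact_mod_cast hmm
      have hc := chain k₀ hk₀K m
      rw [show k₀ + m = k by omega] at hc
      have hcr : (m:ℝ) * ((m:ℝ)+1) ≤ 2 * (((v k : ℤ):ℝ) - ((v k₀ : ℤ):ℝ)) := by
        exact_mod_cast hc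
      have hdist : (m:ℝ)^2 / 2 ≤ ((v k : ℤ):ℝ) - a := by nlinarith
      have hmax : (m:ℝ)^2/2 ≤ max 1 |((v k : ℝ)) - a| := by
        refine le_trans ?_ (le_max_right _ _)
        rw [abs_of_nonneg (by nlinarith)]
        exact hdist
      have hpos : (0:ℝ) < (m:ℝ)^2/2 := by nlinarith
      have humk : (max 1 |((v k : ℝ)) - a|)⁻¹ ≤ ((m:ℝ)^2/2)⁻¹ :=
        inv_anti₀ hpos hmax
      refine le_trans humk ?_
      have hnm : ((n:ℝ))^2 = (m:ℝ)^2 := by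
        have h3 : (n:ℝ) = (k:ℝ) - (k₀:ℝ) := by rw [hn]; push_cast; ring
        have h4 : (m:ℝ) = (k:ℝ) - (k₀:ℝ) := by
          rw [hm]; push_cast [Nat.cast_sub (show k₀ ≤ k by omega)]; ring
        rw [h3, h4]
      rw [hnm, inv_div, div_eq_mul_inv]
      have : (0:ℝ) ≤ ((m:ℝ)^2)⁻¹ := by positivity
      nlinarith
  -- summability of the majorant
  have hinj : Function.Injective (fun k : ℕ => (k:ℤ) - (k₀:ℤ)) := by
    intro p q h
    simp only at h
    omega
  have hs1 : Summable (fun k : ℕ => (if k < K then (1:ℝ) else 0)) := by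
    apply summable_of_ne_finset_zero (s := Finset.range K)
    intro k hk
    rw [if_neg]
    simp only [Finset.mem_range] at hk
    omega
  have hs2 : Summable (fun k : ℕ => G ((k:ℤ) - (k₀:ℤ))) := hGsum.comp_injective hinj
  have hWs : Summable (fun k : ℕ => (if k < K then (1:ℝ) else 0) + G ((k:ℤ) - (k₀:ℤ))) :=
    hs1.add hs2
  have husum : Summable (fun k : ℕ => (max 1 |((v k : ℝ)) - a|)⁻¹) :=
    Summable.of_nonneg_of_le hu0 hbound hWs
  refine ⟨husum, ?_⟩
  have h1 : ∑' k : ℕ, (max 1 |((v k : ℝ)) - a|)⁻¹ ≤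
      ∑' k : ℕ, ((if k < K then (1:ℝ) else 0) + G ((k:ℤ) - (k₀:ℤ))) :=
    husum.tsum_le_tsum hbound hWs
  rw [hs1.tsum_add hs2] at h1
  have h2 : ∑' k : ℕ, (if k < K then (1:ℝ) else 0) = K := by
    rw [tsum_eq_sum (s := Finset.range K) (by
      intro k hk
      rw [if_neg]
      simp only [Finset.mem_range] at hk
      omega)]
    rw [Finset.sum_congr rfl (fun k hk => if_pos (Finset.mem_range.mp hk))]
    simp
  have h3 : ∑' k : ℕ, G ((k:ℤ) - (k₀:ℤ)) ≤ ∑' n : ℤ, G n :=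
    hs2.tsum_le_tsum_of_inj _ hinj (fun c _ => hG0 c) (fun b => le_refl _) hGsum
  rw [h2] at h1
  linarith

lemma int_sum_lemma (P : Polynomial ℤ) (hP : P.Monic) (hd : 2 ≤ P.natDegree) :
    ∃ Cu : ℝ, 0 < Cu ∧ ∀ a : ℝ,
      Summable (fun k : ℤ => (max 1 |(((P.eval k : ℤ):ℝ)) - a|)⁻¹) ∧
      ∑' k : ℤ, (max 1 |(((P.eval k : ℤ):ℝ)) - a|)⁻¹ ≤ Cu := by
  set d := P.natDegree with hdd
  set c : ℤ := (-1)^d with hc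
  have hc2 : c * c = 1 := by rw [hc, ← pow_add, ← two_mul, pow_mul]; norm_num
  have hc0 : c ≠ 0 := by rw [hc]; exact pow_ne_zero _ (by norm_num)
  have hnegX : (-X : ℤ[X]).natDegree = 1 := by rw [natDegree_neg, natDegree_X]
  have hcompdeg : (P.comp (-X)).natDegree = d := by
    rw [natDegree_comp, hnegX, mul_one]
  have hcomp0 : P.comp (-X) ≠ 0 := fun h => by
    rw [h, natDegree_zero] at hcompdeg; omega
  have hcomplc : (P.comp (-X)).leadingCoeff = c := by
    rw [leadingCoeff_comp (by rw [hnegX]; omega), leadingCoeff_neg, leadingCoeff_X,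
      hP.leadingCoeff, one_mul, hc]
  set P₂ : ℤ[X] := C c * P.comp (-X) with hP₂def
  have hCc0 : (C c : ℤ[X]) ≠ 0 := fun h => hc0 (by rwa [C_eq_zero] at h)
  have hP₂deg : P₂.natDegree = d := by
    rw [hP₂def, natDegree_mul hCc0 hcomp0, natDegree_C, zero_add, hcompdeg]
  have hP₂monic : P₂.Monic := by
    have : P₂.leadingCoeff = 1 := by
      rw [hP₂def, leadingCoeff_mul, leadingCoeff_C, hcomplc, hc2]
    exact this
  have heval₂ : ∀ k : ℤ, P₂.eval k = c * P.eval (-k) := by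
    intro k
    rw [hP₂def, eval_mul, eval_C, eval_comp, eval_neg, eval_X]
  obtain ⟨K₁, hK₁, hgap₁⟩ := gap_lemma P hP hd
  obtain ⟨K₂, hK₂, hgap₂⟩ := gap_lemma P₂ hP₂monic (by omega)
  obtain ⟨Cu₁, hCu₁, h₁⟩ := sum_lemma (fun n : ℕ => P.eval (n:ℤ)) K₁ hK₁ (by
    intro k hk
    have h := hgap₁ k hk
    rw [show (((k+1:ℕ)):ℤ) = (k:ℤ)+1 by push_cast; ring]
    exact h)
  obtain ⟨Cu₂, hCu₂, h₂⟩ := sum_lemma (fun n : ℕ => P₂.eval (n:ℤ)) K₂ hK₂ (by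
    intro k hk
    have h := hgap₂ k hk
    rw [show (((k+1:ℕ)):ℤ) = (k:ℤ)+1 by push_cast; ring]
    exact h)
  refine ⟨Cu₁ + Cu₂, by linarith, fun a => ?_⟩
  set f : ℤ → ℝ := fun k => (max 1 |(((P.eval k : ℤ):ℝ)) - a|)⁻¹ with hf
  have hf0 : ∀ k, 0 ≤ f k := fun k => by rw [hf]; positivity
  have habs : ∀ t : ℝ, |((c:ℤ):ℝ) * t| = |t| := by
    intro t
    rw [abs_mul, show |((c:ℤ):ℝ)| = 1 by rw [hc]; push_cast; rw [abs_pow, abs_neg, abs_one, one_pow],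
      one_mul]
  set a₂ : ℝ := ((c:ℤ):ℝ) * a with ha₂
  have key : (fun n : ℕ => (max 1 |(((P₂.eval (n:ℤ) : ℤ):ℝ)) - a₂|)⁻¹) =
      (fun n : ℕ => f (-(n:ℤ))) := by
    funext n
    rw [hf]
    congr 2
    rw [heval₂ (n:ℤ), ha₂]
    push_cast
    rw [← habs (((P.eval (-(n:ℤ)) : ℤ):ℝ) - a)]
    congr 1
    push_cast
    ring
  have hpos : Summable (fun n : ℕ => f (n:ℤ)) := (h₁ a).1
  have hpost : ∑' n : ℕ, f (n:ℤ) ≤ Cu₁ := (h₁ a).2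
  have hneg : Summable (fun n : ℕ => f (-(n:ℤ))) := by
    have := (h₂ a₂).1
    rwa [key] at this
  have hnegt : ∑' n : ℕ, f (-(n:ℤ)) ≤ Cu₂ := by
    have := (h₂ a₂).2
    rwa [key] at this
  have hcast : (fun n : ℕ => f (-((n:ℤ)+1))) = (fun n : ℕ => f (-(((n+1:ℕ)):ℤ))) := by
    funext n
    norm_cast
  have hnegsucc : Summable (fun n : ℕ => f (-((n:ℤ)+1))) := by
    have h5 := hneg.comp_injective (add_left_injective (1:ℕ))
    rw [hcast]
    exact h5
  have hsummable : Summable f := Summable.of_nat_of_neg_add_one hpos hnegsucc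
  refine ⟨hsummable, ?_⟩
  rw [tsum_of_nat_of_neg_add_one hpos hnegsucc]
  have hzero := hneg.tsum_eq_zero_add
  have h0' : 0 ≤ f (-((0:ℕ):ℤ)) := hf0 _
  have hfin : ∑' n : ℕ, f (-((n:ℤ)+1)) ≤ Cu₂ := by
    rw [hcast]
    linarith [hzero, hnegt, h0']
  linarith

end Aux

/-- Uniform `L¹ → L^∞` resolvent estimate: for a monic integer polynomial `P` of degree
`d ≥ 2`, there is `C > 0` such that for all `z ∈ ℂ` with `|Im z| ≥ 1` and all
`f ∈ L¹(𝕋)` with Fourier coefficients `c_k`,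
`‖∑_k (P(k) − z)⁻¹ c_k e^{ikx}‖_{L^∞} ≤ C ‖f‖_{L¹}`. -/
theorem stmt15 (d : ℕ) (hd : 2 ≤ d) (P : Polynomial ℤ) (hP : P.Monic)
    (hdeg : P.natDegree = d) :
    ∃ C : ℝ, 0 < C ∧ ∀ z : ℂ, 1 ≤ |z.im| → ∀ f : ℝ → ℂ,
      IntegrableOn f (Set.Ioc (0:ℝ) (2*π)) → ∀ x : ℝ,
      ‖∑' k : ℤ, (((P.eval k : ℤ) : ℂ) - z)⁻¹ *
          ((1 / (2 * (π : ℂ))) *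
            ∫ y in Set.Ioc (0:ℝ) (2*π), f y * Complex.exp (-(Complex.I * (k : ℂ) * (y : ℂ)))) *
          Complex.exp (Complex.I * (k : ℂ) * (x : ℂ))‖
        ≤ C * ∫ y in Set.Ioc (0:ℝ) (2*π), ‖f y‖ := by
  obtain ⟨Cu, hCu, hsum⟩ := int_sum_lemma P hP (by omega)
  refine ⟨Cu / (2*π), by positivity, fun z hz f hf x => ?_⟩
  set a : ℝ := z.re with ha
  obtain ⟨husum, hutsum⟩ := hsum a
  set I₁ : ℝ := ∫ y in Set.Ioc (0:ℝ) (2*π), ‖f y‖ with hI₁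
  have hI₁0 : 0 ≤ I₁ := integral_nonneg (fun y => norm_nonneg _)
  set u : ℤ → ℝ := fun k => (max 1 |(((P.eval k : ℤ):ℝ)) - a|)⁻¹ with hu
  set t : ℤ → ℂ := fun k => (((P.eval k : ℤ) : ℂ) - z)⁻¹ *
      ((1 / (2 * (π : ℂ))) *
        ∫ y in Set.Ioc (0:ℝ) (2*π), f y * Complex.exp (-(Complex.I * (k : ℂ) * (y : ℂ)))) *
      Complex.exp (Complex.I * (k : ℂ) * (x : ℂ)) with ht
  have hterm : ∀ k : ℤ, ‖t k‖ ≤ u k * ((1/(2*π)) * I₁) := by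
    intro k
    rw [ht, hu]
    simp only [norm_mul]
    have hE : ‖Complex.exp (Complex.I * (k : ℂ) * (x : ℂ))‖ = 1 := by
      rw [Complex.norm_exp]
      norm_num [Complex.mul_re, Complex.mul_im]
    rw [hE, mul_one]
    have hA : ‖(((P.eval k : ℤ) : ℂ) - z)⁻¹‖ ≤ (max 1 |(((P.eval k : ℤ):ℝ)) - a|)⁻¹ := by
      rw [norm_inv]
      apply inv_anti₀ (by positivity)
      apply max_le
      · calc (1:ℝ) ≤ |z.im| := hz
          _ = |(((P.eval k : ℤ) : ℂ) - z).im| := by simp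
          _ ≤ ‖((P.eval k : ℤ) : ℂ) - z‖ := Complex.abs_im_le_norm _
      · calc |(((P.eval k : ℤ):ℝ)) - a| = |(((P.eval k : ℤ) : ℂ) - z).re| := by
              rw [ha]; simp
          _ ≤ ‖((P.eval k : ℤ) : ℂ) - z‖ := Complex.abs_re_le_norm _
    have hB : ‖(1 / (2 * (π:ℂ)))‖ *
        ‖∫ y in Set.Ioc (0:ℝ) (2*π), f y * Complex.exp (-(Complex.I * (k : ℂ) * (y : ℂ)))‖ ≤
        (1/(2*π)) * I₁ := by
      have h1 : ‖(1 / (2 * (π:ℂ)))‖ = 1/(2*π) := by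
        rw [norm_div, norm_one]
        rw [show (2 * (π:ℂ)) = ((2*π : ℝ) : ℂ) by push_cast; ring]
        rw [Complex.norm_real, Real.norm_eq_abs, abs_of_pos (by positivity)]
      have h2 : ‖∫ y in Set.Ioc (0:ℝ) (2*π), f y * Complex.exp (-(Complex.I * (k : ℂ) * (y : ℂ)))‖
          ≤ I₁ := by
        calc ‖∫ y in Set.Ioc (0:ℝ) (2*π), f y * Complex.exp (-(Complex.I * (k : ℂ) * (y : ℂ)))‖
            ≤ ∫ y in Set.Ioc (0:ℝ) (2*π), ‖f y * Complex.exp (-(Complex.I * (k : ℂ) * (y : ℂ)))‖ :=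
              norm_integral_le_integral_norm _
          _ = I₁ := by
              rw [hI₁]
              apply integral_congr_ae
              apply Filter.Eventually.of_forall
              intro y
              simp only [norm_mul]
              have : ‖Complex.exp (-(Complex.I * (k : ℂ) * (y : ℂ)))‖ = 1 := by
                rw [Complex.norm_exp]
                norm_num [Complex.mul_re, Complex.mul_im]
              rw [this, mul_one]
      rw [h1]
      apply mul_le_mul_of_nonneg_left h2 (by positivity)
    calc ‖(((P.eval k : ℤ) : ℂ) - z)⁻¹‖ * (‖(1 / (2 * (π:ℂ)))‖ *
          ‖∫ y in Set.Ioc (0:ℝ) (2*π), f y * Complex.exp (-(Complex.I * (k : ℂ) * (y : ℂ)))‖)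
        ≤ (max 1 |(((P.eval k : ℤ):ℝ)) - a|)⁻¹ * ((1/(2*π)) * I₁) := by
          apply mul_le_mul hA hB (by positivity) (by positivity)
      _ = (max 1 |(((P.eval k : ℤ):ℝ)) - a|)⁻¹ * ((1/(2*π)) * I₁) := rfl
  have hnormsum : Summable (fun k : ℤ => ‖t k‖) :=
    Summable.of_nonneg_of_le (fun k => norm_nonneg _) hterm (husum.mul_right _)
  calc ‖∑' k : ℤ, t k‖ ≤ ∑' k : ℤ, ‖t k‖ := norm_tsum_le_tsum_norm hnormsum
    _ ≤ ∑' k : ℤ, u k * ((1/(2*π)) * I₁) := hnormsum.tsum_le_tsum hterm (husum.mul_right _)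
    _ = (∑' k : ℤ, u k) * ((1/(2*π)) * I₁) := tsum_mul_right
    _ ≤ Cu * ((1/(2*π)) * I₁) := by
        apply mul_le_mul_of_nonneg_right hutsum (by positivity)
    _ = Cu / (2*π) * I₁ := by ring
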